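/- If two graphs G₁ and G₂ on n nodes are 𝔴-equivalent, then their adjacency matrices A₁ and A₂ have the same spectrum (same eigenvalues with the same multiplicities). -/

import Mathlib

set_option maxRecDepth 8000

open Matrix Polynomial Finset

section Aux

variable {n : ℕ}

/-- Conjugation by a pair of mutually inverse matrices preserves the charmatrix. -/
lemma charmatrix_conj_aux (U V M : Matrix (Fin n) (Fin n) ℝ) (hUV : U * V = 1) :
    charmatrix (U * M * V) = U.map C * charmatrix M * V.map C := by
  have hmap : ∀ (A B : Matrix (Fin n) (Fin n) ℝ), (A * B).map C = A.map C * B.map C := by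
    intro A B
    simpa using (RingHom.mapMatrix (C : ℝ →+* ℝ[X])).map_mul A B
  have hscalar : Matrix.scalar (Fin n) (X : ℝ[X]) = (X : ℝ[X]) • (1 : Matrix (Fin n) (Fin n) ℝ[X]) := by
    rw [Matrix.smul_one_eq_diagonal]
    rfl
  have hscal : U.map C * Matrix.scalar (Fin n) (X : ℝ[X]) * V.map C
      = Matrix.scalar (Fin n) (X : ℝ[X]) := by
    rw [hscalar, Matrix.mul_smul, Matrix.mul_one, Matrix.smul_mul, ← hmap, hUV,
      Matrix.map_one _ (map_zero C) (map_one C)]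
  unfold charmatrix
  simp only [RingHom.mapMatrix_apply]
  rw [Matrix.mul_sub, Matrix.sub_mul, hscal, ← hmap, ← hmap]

/-- Conjugation by a unitary (or any invertible pair) preserves the char polynomial. -/
lemma charpoly_conj_aux (U V M : Matrix (Fin n) (Fin n) ℝ) (hUV : U * V = 1) :
    (U * M * V).charpoly = M.charpoly := by
  have hmap : ∀ (A B : Matrix (Fin n) (Fin n) ℝ), (A * B).map C = A.map C * B.map C := by
    intro A B
    simpa using (RingHom.mapMatrix (C : ℝ →+* ℝ[X])).map_mul A B
  have hdet : det (U.map C) * det (V.map C) = 1 := by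
    rw [← det_mul, ← hmap, hUV]
    simp
  unfold Matrix.charpoly
  rw [charmatrix_conj_aux U V M hUV, det_mul, det_mul]
  ring_nf
  rw [mul_comm (det (U.map C)), mul_assoc, hdet, mul_one]

lemma charpoly_diagonal_aux (d : Fin n → ℝ) :
    (Matrix.diagonal d).charpoly = ∏ i, (X - C (d i)) := by
  have : charmatrix (Matrix.diagonal d) = Matrix.diagonal (fun i => (X : ℝ[X]) - C (d i)) := by
    ext i j
    rcases eq_or_ne i j with rfl | hij
    · simp
    · simp [hij, Matrix.diagonal_apply_ne _ hij]
  rw [Matrix.charpoly, this, det_diagonal]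

lemma conj_pow_aux (U V D : Matrix (Fin n) (Fin n) ℝ) (hUV : U * V = 1) (hVU : V * U = 1)
    (l : ℕ) : (U * D * V) ^ l = U * D ^ l * V := by
  induction l with
  | zero =>
      simp only [pow_zero]
      rw [Matrix.mul_one, hUV]
  | succ k ih =>
      rw [pow_succ, ih, pow_succ]
      have : U * D ^ k * V * (U * D * V) = U * (D ^ k * (V * U) * D) * V := by
        simp only [Matrix.mul_assoc]
      rw [this, hVU]
      simp only [Matrix.mul_one, Matrix.mul_assoc]

/-- Newton's identities: equal power sums imply equal elementary symmetric functions. -/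
lemma esymm_eq_of_psum_eq (f g : Fin n → ℝ)
    (hp : ∀ k, 1 ≤ k → ∑ i, f i ^ k = ∑ i, g i ^ k) :
    ∀ k, MvPolynomial.aeval f (MvPolynomial.esymm (Fin n) ℝ k)
        = MvPolynomial.aeval g (MvPolynomial.esymm (Fin n) ℝ k) := by
  intro k
  induction k using Nat.strong_induction_on with
  | _ k ih =>
    rcases Nat.eq_zero_or_pos k with rfl | hk
    · simp [MvPolynomial.esymm_zero]
    · have hNf := congrArg (MvPolynomial.aeval f) (MvPolynomial.mul_esymm_eq_sum (Fin n) ℝ k)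
      have hNg := congrArg (MvPolynomial.aeval g) (MvPolynomial.mul_esymm_eq_sum (Fin n) ℝ k)
      simp only [_root_.map_mul, map_sum, map_pow, _root_.map_neg, _root_.map_one, map_natCast] at hNf hNg
      have hpsum : ∀ (h : Fin n → ℝ) (m : ℕ),
          MvPolynomial.aeval h (MvPolynomial.psum (Fin n) ℝ m) = ∑ i, h i ^ m := by
        intro h m
        simp [MvPolynomial.psum, map_sum]
      have hsum_eq :
          ∑ a ∈ Finset.HasAntidiagonal.antidiagonal k with a.1 < k,
              (-1 : ℝ) ^ a.1 * MvPolynomial.aeval f (MvPolynomial.esymm (Fin n) ℝ a.1)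
                * MvPolynomial.aeval f (MvPolynomial.psum (Fin n) ℝ a.2)
          = ∑ a ∈ Finset.HasAntidiagonal.antidiagonal k with a.1 < k,
              (-1 : ℝ) ^ a.1 * MvPolynomial.aeval g (MvPolynomial.esymm (Fin n) ℝ a.1)
                * MvPolynomial.aeval g (MvPolynomial.psum (Fin n) ℝ a.2) := by
        refine Finset.sum_congr rfl ?_
        intro a ha
        simp only [Finset.mem_filter, Finset.HasAntidiagonal.mem_antidiagonal] at ha
        have h1 : a.2 ≥ 1 := by omega
        rw [ih a.1 ha.2, hpsum f a.2, hpsum g a.2, hp a.2 h1]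
      have hk' : (k : ℝ) ≠ 0 := Nat.cast_ne_zero.mpr (by omega)
      apply mul_left_cancel₀ hk'
      calc (k : ℝ) * MvPolynomial.aeval f (MvPolynomial.esymm (Fin n) ℝ k)
          = (-1 : ℝ) ^ (k + 1) *
              ∑ a ∈ Finset.HasAntidiagonal.antidiagonal k with a.1 < k,
                (-1 : ℝ) ^ a.1 * MvPolynomial.aeval f (MvPolynomial.esymm (Fin n) ℝ a.1)
                  * MvPolynomial.aeval f (MvPolynomial.psum (Fin n) ℝ a.2) := by
            simpa using hNf
        _ = (-1 : ℝ) ^ (k + 1) *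
              ∑ a ∈ Finset.HasAntidiagonal.antidiagonal k with a.1 < k,
                (-1 : ℝ) ^ a.1 * MvPolynomial.aeval g (MvPolynomial.esymm (Fin n) ℝ a.1)
                  * MvPolynomial.aeval g (MvPolynomial.psum (Fin n) ℝ a.2) := by
            rw [hsum_eq]
        _ = (k : ℝ) * MvPolynomial.aeval g (MvPolynomial.esymm (Fin n) ℝ k) := by
            simpa using hNg.symm

/-- Equal power sums imply equal products ∏ (X - C (f i)). -/
lemma prod_X_sub_C_eq_of_psum_eq (f g : Fin n → ℝ)
    (hp : ∀ k, 1 ≤ k → ∑ i, f i ^ k = ∑ i, g i ^ k) :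
    ∏ i, (X - C (f i)) = ∏ i, (X - C (g i)) := by
  have hp' : ∀ k, 1 ≤ k → ∑ i, (-f i) ^ k = ∑ i, (-g i) ^ k := by
    intro k hk
    rw [Finset.sum_congr rfl (fun i _ => neg_pow (f i) k),
      Finset.sum_congr rfl (fun i _ => neg_pow (g i) k),
      ← Finset.mul_sum, ← Finset.mul_sum, hp k hk]
  have hes := esymm_eq_of_psum_eq (fun i => -f i) (fun i => -g i) hp'
  have key : ∀ (h : Fin n → ℝ), ∏ i, ((X : ℝ[X]) - C (h i))
      = ∑ j ∈ Finset.range (n + 1),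
          C ((Finset.univ.val.map (fun i => -h i)).esymm j) * X ^ (n - j) := by
    intro h
    have hv := Multiset.prod_X_add_C_eq_sum_esymm
      ((Finset.univ.val.map (fun i : Fin n => -h i)) : Multiset ℝ)
    rw [Multiset.map_map] at hv
    have hcard : Multiset.card (Finset.univ.val.map (fun i : Fin n => -h i)) = n := by
      simp
    rw [hcard] at hv
    rw [show (∏ i, ((X : ℝ[X]) - C (h i)))
        = (Multiset.map ((fun r : ℝ => X + C r) ∘ (fun i => -h i)) Finset.univ.val).prod by
      rw [← Finset.prod_eq_multiset_prod]
      exact Finset.prod_congr rfl fun i _ => by simp [sub_eq_add_neg]]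
    rw [hv]
  rw [key f, key g]
  refine Finset.sum_congr rfl fun j _ => ?_
  have h1 := MvPolynomial.aeval_esymm_eq_multiset_esymm (Fin n) ℝ j (fun i => -f i)
  have h2 := MvPolynomial.aeval_esymm_eq_multiset_esymm (Fin n) ℝ j (fun i => -g i)
  rw [← h1, ← h2, hes j]

end Aux

/-- If `G₁` and `G₂` are `𝔴`-equivalent, then they are cospectral (their adjacency
matrices have the same characteristic polynomial, hence the same eigenvalues with
multiplicities). -/
theorem w_equiv_implies_cospectral (n : ℕ) (G₁ G₂ : SimpleGraph (Fin n))
    [DecidableRel G₁.Adj] [DecidableRel G₂.Adj]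
    (h : ∃ π : Equiv.Perm (Fin n), ∀ i : Fin n, ∃ σ : Equiv.Perm (Fin n),
      ∀ (l : ℕ) (j : Fin n),
        ((G₁.adjMatrix ℝ) ^ l) j i = ((G₂.adjMatrix ℝ) ^ l) (σ j) (π i)) :
    (G₁.adjMatrix ℝ).charpoly = (G₂.adjMatrix ℝ).charpoly := by
  classical
  set A₁ := G₁.adjMatrix ℝ with hA₁
  set A₂ := G₂.adjMatrix ℝ with hA₂
  -- Step 1: equal traces of all powers
  have htr : ∀ l : ℕ, (A₁ ^ l).trace = (A₂ ^ l).trace := by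
    intro l
    obtain ⟨π, hπ⟩ := h
    have hdiag : ∀ i : Fin n, (A₁ ^ l) i i = (A₂ ^ l) (π i) (π i) := by
      intro i
      obtain ⟨σ, hσ⟩ := hπ i
      have h0 := hσ 0 i
      simp only [pow_zero, Matrix.one_apply_eq] at h0
      have hfix : σ i = π i := by
        by_contra hne
        rw [Matrix.one_apply_ne hne] at h0
        exact one_ne_zero h0
      have := hσ l i
      rwa [hfix] at this
    unfold Matrix.trace
    calc ∑ i, (A₁ ^ l).diag i = ∑ i, (A₂ ^ l) (π i) (π i) := by
          exact Finset.sum_congr rfl fun i _ => hdiag i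
      _ = ∑ i, (A₂ ^ l).diag i := Fintype.sum_equiv π _ _ (fun i => rfl)
  -- Step 2: both are Hermitian (real symmetric)
  have hH₁ : A₁.IsHermitian := by
    rw [hA₁, Matrix.IsHermitian, Matrix.conjTranspose_eq_transpose_of_trivial]
    exact (SimpleGraph.isSymm_adjMatrix (G := G₁)).eq
  have hH₂ : A₂.IsHermitian := by
    rw [hA₂, Matrix.IsHermitian, Matrix.conjTranspose_eq_transpose_of_trivial]
    exact (SimpleGraph.isSymm_adjMatrix (G := G₂)).eq
  -- Step 3: spectral decomposition
  have key : ∀ (A : Matrix (Fin n) (Fin n) ℝ) (hA : A.IsHermitian),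
      A.charpoly = ∏ i, (X - C (hA.eigenvalues i)) ∧
      ∀ l : ℕ, (A ^ l).trace = ∑ i, hA.eigenvalues i ^ l := by
    intro A hA
    set U := (hA.eigenvectorUnitary : Matrix (Fin n) (Fin n) ℝ) with hU
    have hUV : U * star U = 1 := (Matrix.mem_unitaryGroup_iff).mp hA.eigenvectorUnitary.2
    have hVU : star U * U = 1 := (Matrix.mem_unitaryGroup_iff').mp hA.eigenvectorUnitary.2
    have hspec : A = U * Matrix.diagonal hA.eigenvalues * star U := by
      have := hA.spectral_theorem
      rw [Unitary.conjStarAlgAut_apply] at this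
      convert this using 3
      all_goals rfl
    constructor
    · conv_lhs => rw [hspec]
      rw [charpoly_conj_aux U (star U) _ hUV, charpoly_diagonal_aux]
    · intro l
      conv_lhs => rw [hspec]
      rw [conj_pow_aux U (star U) _ hUV hVU l, Matrix.trace_mul_cycle,
        hVU, Matrix.one_mul, Matrix.diagonal_pow, Matrix.trace_diagonal]
      simp
  obtain ⟨hc₁, ht₁⟩ := key A₁ hH₁
  obtain ⟨hc₂, ht₂⟩ := key A₂ hH₂
  rw [hc₁, hc₂]
  apply prod_X_sub_C_eq_of_psum_eq
  intro k _
  rw [← ht₁ k, ← ht₂ k, htr k]
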